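/- Let m, n ≥ 2 be integers. The graph semiring of the disjoint union of one path with n + 1 vertices and m paths with n vertices each (the {0, ω}-direct union S_{p_{n+1}} ∘ ⋃_{1≤i≤m}^{ω} S_{p_n}) is a homomorphic image of a subsemiring of the m-th direct power S_{p_{n+1}}^m. -/

import Mathlib

universe u v

-- The underlying set of the graph semiring of a graph with vertex set `V`:
-- the vertices together with two extra elements `0` and `ω`.
inductive GS (V : Type u) : Type u where
  | zero : GS V
  | omega : GS V
  | vert : V → GS V

-- Multiplication of the graph semiring: `x·y = ω` if `x, y` are vertices joined by an
-- edge, and `x·y = 0` otherwise.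
open Classical in
noncomputable def gsMul {V : Type u} (E : V → V → Prop) : GS V → GS V → GS V
  | GS.vert a, GS.vert b => if E a b then GS.omega else GS.zero
  | _, _ => GS.zero

-- The flat addition of the graph semiring: `a + b = a` if `a = b`, else `0`.
open Classical in
noncomputable def gsAdd {V : Type u} (a b : GS V) : GS V :=
  if a = b then a else GS.zero

-- `gsSum f n = f 0 + f 1 + ⋯ + f n` (a sum of `n + 1` terms).
noncomputable def gsSum {V : Type u} (f : ℕ → GS V) : ℕ → GS V
  | 0 => f 0
  | n + 1 => gsAdd (gsSum f n) (f (n + 1))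

-- `E` is a graph (in the sense of the paper): a directed graph with no isolated
-- vertices in which every vertex has out-degree at most 1 and in-degree at most 1.
def IsGraph {V : Type u} (E : V → V → Prop) : Prop :=
  (∀ v : V, ∃ u : V, E v u ∨ E u v) ∧
  (∀ v a b : V, E v a → E v b → a = b) ∧
  (∀ v a b : V, E a v → E b v → a = b)

-- `v 0, v 1, …, v (m - 1)` is a path of the graph `E` with `m` vertices.
def IsPathOn {V : Type u} (E : V → V → Prop) (m : ℕ) (v : ℕ → V) : Prop :=
  (∀ i < m, ∀ j < m, v i = v j → i = j) ∧
  (∀ i : ℕ, i + 1 < m → E (v i) (v (i + 1)))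

-- `v 0, v 1, …, v (m - 1)` is a cycle of the graph `E` of length `m`.
def IsCycleOn {V : Type u} (E : V → V → Prop) (m : ℕ) (v : ℕ → V) : Prop :=
  1 ≤ m ∧
  (∀ i < m, ∀ j < m, v i = v j → i = j) ∧
  (∀ i : ℕ, i + 1 < m → E (v i) (v (i + 1))) ∧
  E (v (m - 1)) (v 0)

-- `B` (with operations `addB`, `mulB`) is a homomorphic image of a subsemiring of `A`
-- (with operations `addA`, `mulA`): there is a subset of `A` closed under both
-- operations and a surjection from it onto `B` preserving both operations.
def IsHomImageOfSub {A : Type u} {B : Type v}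
    (addA mulA : A → A → A) (addB mulB : B → B → B) : Prop :=
  ∃ (T : Set A) (φ : A → B),
    (∀ x ∈ T, ∀ y ∈ T, addA x y ∈ T ∧ mulA x y ∈ T) ∧
    (∀ b : B, ∃ x ∈ T, φ x = b) ∧
    (∀ x ∈ T, ∀ y ∈ T,
      φ (addA x y) = addB (φ x) (φ y) ∧ φ (mulA x y) = mulB (φ x) (φ y))

-- The edge relation of the path with vertices `a_1, …, a_k` (as `Fin k`).
def pathE (k : ℕ) : Fin k → Fin k → Prop := fun i j => (j : ℕ) = (i : ℕ) + 1

-- The edge relation of the disjoint union of one path with `n + 1` vertices and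
-- `m` paths with `n` vertices each.
def unionPathE19 (m n : ℕ) :
    (Fin (n + 1) ⊕ (Fin m × Fin n)) → (Fin (n + 1) ⊕ (Fin m × Fin n)) → Prop :=
  fun p q =>
    match p, q with
    | Sum.inl i, Sum.inl j => (j : ℕ) = (i : ℕ) + 1
    | Sum.inr a, Sum.inr b => a.1 = b.1 ∧ (b.2 : ℕ) = (a.2 : ℕ) + 1
    | _, _ => False


section Stmt19Aux

variable {V : Type u}

theorem gsAdd_self19 (a : GS V) : gsAdd a a = a := by simp [gsAdd]

theorem gsAdd_ne19 {a b : GS V} (h : a ≠ b) : gsAdd a b = GS.zero := by simp [gsAdd, h]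

theorem gsAdd_zero_left19 (b : GS V) : gsAdd (GS.zero : GS V) b = GS.zero := by
  by_cases h : (GS.zero : GS V) = b
  · simp [gsAdd, ← h]
  · simp [gsAdd, h]

theorem gsMul_cases19 (E : V → V → Prop) (a b : GS V) :
    gsMul E a b = GS.zero ∨ gsMul E a b = GS.omega := by
  cases a <;> cases b <;> simp only [gsMul]
  case vert.vert u v =>
    split
    · exact Or.inr rfl
    · exact Or.inl rfl
  all_goals exact Or.inl trivial

theorem gsMul_vert_omega19 {E : V → V → Prop} {a b : V}
    (h : gsMul E (GS.vert a) (GS.vert b) = GS.omega) : E a b := by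
  by_cases hE : E a b
  · exact hE
  · simp [gsMul, hE] at h

theorem gsMul_eq_omega19 {E : V → V → Prop} {a b : GS V}
    (h : gsMul E a b = GS.omega) :
    ∃ u v, a = GS.vert u ∧ b = GS.vert v ∧ E u v := by
  cases a <;> cases b <;> simp only [gsMul] at h
  case vert.vert u v =>
    refine ⟨u, v, rfl, rfl, ?_⟩
    by_cases hE : E u v
    · exact hE
    · rw [if_neg hE] at h; exact nomatch h
  all_goals exact nomatch h

theorem gsMul_of_E19 {E : V → V → Prop} {a b : V} (h : E a b) :
    gsMul E (GS.vert a) (GS.vert b) = GS.omega := by simp [gsMul, h]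

theorem gsMul_not_vert_left19 {E : V → V → Prop} {a b : GS V}
    (h : ∀ u : V, a ≠ GS.vert u) : gsMul E a b = GS.zero := by
  cases a <;> cases b <;> simp only [gsMul]
  exact absurd rfl (h _)

theorem gsMul_not_vert_right19 {E : V → V → Prop} {a b : GS V}
    (h : ∀ u : V, b ≠ GS.vert u) : gsMul E a b = GS.zero := by
  cases a <;> cases b <;> simp only [gsMul]
  exact absurd rfl (h _)

end Stmt19Aux

/-- The all-`ω` tuple. -/
def allom19 (m n : ℕ) : Fin m → GS (Fin (n + 1)) := fun _ => GS.omega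

/-- The constant tuple at vertex `j` (image of vertex `j` of the long path). -/
def cst19 (m n : ℕ) (j : Fin (n + 1)) : Fin m → GS (Fin (n + 1)) := fun _ => GS.vert j

/-- The tuple with value `a_{j+1}` at coordinate `k` and `a_j` elsewhere
(image of vertex `j` of the `k`-th short path). -/
def tpt19 (m n : ℕ) (k : Fin m) (j : Fin n) : Fin m → GS (Fin (n + 1)) :=
  fun i => if i = k then GS.vert j.succ else GS.vert j.castSucc

open Classical in
/-- The homomorphism from the subsemiring onto the union graph semiring. -/
noncomputable def phi19 (m n : ℕ) (f : Fin m → GS (Fin (n + 1))) :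
    GS (Fin (n + 1) ⊕ (Fin m × Fin n)) :=
  if f = allom19 m n then GS.omega
  else if h : ∃ j, f = cst19 m n j then GS.vert (Sum.inl (Classical.choose h))
  else if h : ∃ p : Fin m × Fin n, f = tpt19 m n p.1 p.2 then
    GS.vert (Sum.inr (Classical.choose h))
  else GS.zero

section Stmt19Lemmas

variable {m n : ℕ}

theorem exists_ne_fin19 (hm : 2 ≤ m) (k : Fin m) : ∃ i : Fin m, i ≠ k := by
  have : Nontrivial (Fin m) := Fin.nontrivial_iff_two_le.mpr hm
  exact exists_ne k

theorem cst19_inj (hm : 2 ≤ m) {j j' : Fin (n + 1)}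
    (h : cst19 m n j = cst19 m n j') : j = j' := by
  have := congrFun h ⟨0, by omega⟩
  simpa [cst19] using this

theorem cst19_ne_allom (hm : 2 ≤ m) (j : Fin (n + 1)) :
    cst19 m n j ≠ allom19 m n := by
  intro h
  have := congrFun h ⟨0, by omega⟩
  simp [cst19, allom19] at this

theorem tpt19_ne_allom (hm : 2 ≤ m) (k : Fin m) (j : Fin n) :
    tpt19 m n k j ≠ allom19 m n := by
  intro h
  have := congrFun h k
  simp [tpt19, allom19] at this

theorem tpt19_ne_cst (hm : 2 ≤ m) (k : Fin m) (j : Fin n) (j' : Fin (n + 1)) :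
    tpt19 m n k j ≠ cst19 m n j' := by
  intro h
  obtain ⟨i, hik⟩ := exists_ne_fin19 hm k
  have h1 := congrFun h k
  have h2 := congrFun h i
  simp [tpt19, cst19, hik] at h1 h2
  have e1 : (j.succ : ℕ) = (j' : ℕ) := congrArg Fin.val h1
  have e2 : (j.castSucc : ℕ) = (j' : ℕ) := congrArg Fin.val h2
  simp [Fin.val_succ, Fin.coe_castSucc] at e1 e2
  omega

theorem tpt19_inj (hm : 2 ≤ m) {k k' : Fin m} {j j' : Fin n}
    (h : tpt19 m n k j = tpt19 m n k' j') : k = k' ∧ j = j' := by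
  by_cases hkk : k = k'
  · subst hkk
    have h1 := congrFun h k
    simp [tpt19] at h1
    exact ⟨rfl, h1⟩
  · exfalso
    have h1 := congrFun h k
    have h2 := congrFun h k'
    simp [tpt19, hkk, Ne.symm hkk] at h1 h2
    have e1 : (j : ℕ) + 1 = (j' : ℕ) := by
      have := congrArg Fin.val h1; simpa [Fin.val_succ, Fin.coe_castSucc] using this
    have e2 : (j : ℕ) = (j' : ℕ) + 1 := by
      have := congrArg Fin.val h2; simpa [Fin.val_succ, Fin.coe_castSucc] using this
    omega

theorem phi19_allom : phi19 m n (allom19 m n) = GS.omega := by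
  simp [phi19]

theorem phi19_cst (hm : 2 ≤ m) (j : Fin (n + 1)) :
    phi19 m n (cst19 m n j) = GS.vert (Sum.inl j) := by
  have hne := cst19_ne_allom hm j
  have hex : ∃ j', cst19 m n j = cst19 m n j' := ⟨j, rfl⟩
  simp only [phi19, hne, if_false, hex, dif_pos]
  have := Classical.choose_spec hex
  rw [cst19_inj hm this.symm]

theorem phi19_tpt (hm : 2 ≤ m) (k : Fin m) (j : Fin n) :
    phi19 m n (tpt19 m n k j) = GS.vert (Sum.inr (k, j)) := by
  have hne := tpt19_ne_allom hm k j
  have hnc : ¬∃ j', tpt19 m n k j = cst19 m n j' := by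
    rintro ⟨j', hj'⟩; exact tpt19_ne_cst hm k j j' hj'
  have hex : ∃ p : Fin m × Fin n, tpt19 m n k j = tpt19 m n p.1 p.2 := ⟨(k, j), rfl⟩
  simp only [phi19, hne, if_false, hnc, dif_neg, hex, dif_pos, not_false_iff]
  have := Classical.choose_spec hex
  obtain ⟨h1, h2⟩ := tpt19_inj hm this.symm
  congr 1
  exact congrArg Sum.inr (Prod.ext h1.symm h2.symm).symm

theorem phi19_zero_entry {f : Fin m → GS (Fin (n + 1))} {i : Fin m}
    (h : f i = GS.zero) : phi19 m n f = GS.zero := by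
  have h1 : f ≠ allom19 m n := by
    intro he; rw [he] at h; simp [allom19] at h
  have h2 : ¬∃ j, f = cst19 m n j := by
    rintro ⟨j, he⟩; rw [he] at h; simp [cst19] at h
  have h3 : ¬∃ p : Fin m × Fin n, f = tpt19 m n p.1 p.2 := by
    rintro ⟨p, he⟩; rw [he] at h; simp [tpt19] at h
    split at h <;> simp at h
  simp [phi19, h1, h2, h3]

theorem phi19_eq_omega {f : Fin m → GS (Fin (n + 1))}
    (h : phi19 m n f = GS.omega) : f = allom19 m n := by
  by_cases h1 : f = allom19 m n
  · exact h1
  · exfalso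
    simp only [phi19, h1, if_false] at h
    split at h
    · exact nomatch h
    · split at h
      · exact nomatch h
      · exact nomatch h

theorem phi19_eq_inl {f : Fin m → GS (Fin (n + 1))} {j : Fin (n + 1)}
    (h : phi19 m n f = GS.vert (Sum.inl j)) : f = cst19 m n j := by
  by_cases h1 : f = allom19 m n
  · rw [h1, phi19_allom] at h; exact absurd h (by simp)
  · simp only [phi19, h1, if_false] at h
    by_cases h2 : ∃ j', f = cst19 m n j'
    · rw [dif_pos h2] at h
      have hs := Classical.choose_spec h2
      have : Classical.choose h2 = j := by
        have := GS.vert.inj h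
        exact Sum.inl.inj this
      rwa [this] at hs
    · rw [dif_neg h2] at h
      split at h <;> simp_all

theorem phi19_eq_inr {f : Fin m → GS (Fin (n + 1))} {k : Fin m} {j : Fin n}
    (h : phi19 m n f = GS.vert (Sum.inr (k, j))) : f = tpt19 m n k j := by
  by_cases h1 : f = allom19 m n
  · rw [h1, phi19_allom] at h; exact absurd h (by simp)
  · simp only [phi19, h1, if_false] at h
    by_cases h2 : ∃ j', f = cst19 m n j'
    · rw [dif_pos h2] at h; simp at h
    · rw [dif_neg h2] at h
      by_cases h3 : ∃ p : Fin m × Fin n, f = tpt19 m n p.1 p.2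
      · rw [dif_pos h3] at h
        have hs := Classical.choose_spec h3
        have : Classical.choose h3 = (k, j) := Sum.inr.inj (GS.vert.inj h)
        rwa [this] at hs
      · rw [dif_neg h3] at h; exact absurd h (by simp)

end Stmt19Lemmas


theorem cst19_apply {m n : ℕ} (j : Fin (n + 1)) (i : Fin m) :
    cst19 m n j i = GS.vert j := rfl

theorem tpt19_apply_self {m n : ℕ} (k : Fin m) (j : Fin n) :
    tpt19 m n k j k = GS.vert j.succ := by simp [tpt19]

theorem tpt19_apply_ne {m n : ℕ} {i k : Fin m} (h : i ≠ k) (j : Fin n) :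
    tpt19 m n k j i = GS.vert j.castSucc := by simp [tpt19, h]

/-- For `m, n ≥ 2`, the graph semiring of the disjoint union of one path
with `n + 1` vertices and `m` paths with `n` vertices each (the `{0, ω}`-direct union
`S_{p_{n+1}} ∘ ⋃_{1≤i≤m}^{ω} S_{p_n}`) is a homomorphic image of a subsemiring of the
`m`-th direct power `S_{p_{n+1}}^m`. -/
theorem stmt_19 (m n : ℕ) (hm : 2 ≤ m) (hn : 2 ≤ n) :
    IsHomImageOfSub
      (fun f g : Fin m → GS (Fin (n + 1)) => fun i => gsAdd (f i) (g i))
      (fun f g : Fin m → GS (Fin (n + 1)) =>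
        fun i => gsMul (pathE (n + 1)) (f i) (g i))
      (gsAdd : GS (Fin (n + 1) ⊕ (Fin m × Fin n)) →
        GS (Fin (n + 1) ⊕ (Fin m × Fin n)) → GS (Fin (n + 1) ⊕ (Fin m × Fin n)))
      (gsMul (unionPathE19 m n)) := by
  classical
  have hm0 : 0 < m := by omega
  refine ⟨{f | f = allom19 m n ∨ (∃ j, f = cst19 m n j) ∨ (∃ k j, f = tpt19 m n k j) ∨
      ∃ i, f i = GS.zero}, phi19 m n, ?_, ?_, ?_⟩
  · -- closure
    intro x hx y hy
    constructor
    · beta_reduce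
      by_cases hxy : x = y
      · subst hxy
        have hxx : (fun i => gsAdd (x i) (x i)) = x := funext fun i => gsAdd_self19 _
        rw [hxx]; exact hx
      · obtain ⟨i, hi⟩ : ∃ i, x i ≠ y i := by
          by_contra hc; push_neg at hc; exact hxy (funext hc)
        exact Or.inr (Or.inr (Or.inr ⟨i, gsAdd_ne19 hi⟩))
    · beta_reduce
      by_cases hall : ∀ i, gsMul (pathE (n + 1)) (x i) (y i) = GS.omega
      · exact Or.inl (funext fun i => hall i)
      · push_neg at hall
        obtain ⟨i, hi⟩ := hall
        exact Or.inr (Or.inr (Or.inr ⟨i, (gsMul_cases19 _ _ _).resolve_right hi⟩))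
  · -- surjectivity
    intro b
    match b with
    | GS.zero =>
      refine ⟨(fun _ => GS.zero), Or.inr (Or.inr (Or.inr ⟨⟨0, hm0⟩, rfl⟩)), ?_⟩
      exact phi19_zero_entry (i := ⟨0, hm0⟩) rfl
    | GS.omega => exact ⟨allom19 m n, Or.inl rfl, phi19_allom⟩
    | GS.vert (Sum.inl j) =>
      exact ⟨cst19 m n j, Or.inr (Or.inl ⟨j, rfl⟩), phi19_cst hm j⟩
    | GS.vert (Sum.inr (k, j)) =>
      exact ⟨tpt19 m n k j, Or.inr (Or.inr (Or.inl ⟨k, j, rfl⟩)), phi19_tpt hm k j⟩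
  · -- homomorphism
    intro x hx y hy
    constructor
    · -- addition
      beta_reduce
      by_cases hxy : x = y
      · subst hxy
        have hxx : (fun i => gsAdd (x i) (x i)) = x := funext fun i => gsAdd_self19 _
        rw [hxx, gsAdd_self19]
      · obtain ⟨i, hi⟩ : ∃ i, x i ≠ y i := by
          by_contra hc; push_neg at hc; exact hxy (funext hc)
        have hL : phi19 m n (fun i => gsAdd (x i) (y i)) = GS.zero :=
          phi19_zero_entry (i := i) (gsAdd_ne19 hi)
        rw [hL]
        rcases hpx : phi19 m n x with _ | _ | v
        · exact (gsAdd_zero_left19 _).symm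
        · have hx' := phi19_eq_omega hpx
          have hne : GS.omega ≠ phi19 m n y := by
            intro he
            exact hxy (hx'.trans (phi19_eq_omega he.symm).symm)
          exact (gsAdd_ne19 hne).symm
        · match v with
          | Sum.inl j =>
            have hx' := phi19_eq_inl hpx
            have hne : GS.vert (Sum.inl j) ≠ phi19 m n y := by
              intro he
              exact hxy (hx'.trans (phi19_eq_inl he.symm).symm)
            exact (gsAdd_ne19 hne).symm
          | Sum.inr (k, j) =>
            have hx' := phi19_eq_inr hpx
            have hne : GS.vert (Sum.inr (k, j)) ≠ phi19 m n y := by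
              intro he
              exact hxy (hx'.trans (phi19_eq_inr he.symm).symm)
            exact (gsAdd_ne19 hne).symm
    · -- multiplication
      beta_reduce
      by_cases hall : ∀ i, gsMul (pathE (n + 1)) (x i) (y i) = GS.omega
      · have hprod : (fun i => gsMul (pathE (n + 1)) (x i) (y i)) = allom19 m n :=
          funext fun i => hall i
        rw [hprod, phi19_allom]
        have hstep : ∀ (i : Fin m) (a b : Fin (n + 1)),
            x i = GS.vert a → y i = GS.vert b → (b : ℕ) = (a : ℕ) + 1 := by
          intro i a b ha hb
          obtain ⟨u, v, hu, hv, hE⟩ := gsMul_eq_omega19 (hall i)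
          rw [ha] at hu; rw [hb] at hv
          cases GS.vert.inj hu
          cases GS.vert.inj hv
          exact hE
        have hvert : ∀ z : Fin m → GS (Fin (n + 1)),
            (z = allom19 m n ∨ (∃ j, z = cst19 m n j) ∨ (∃ k j, z = tpt19 m n k j) ∨
              ∃ i, z i = GS.zero) →
            (∀ i, ∃ u, z i = GS.vert u) →
            (∃ j, z = cst19 m n j) ∨ ∃ k j, z = tpt19 m n k j := by
          intro z hz hv
          rcases hz with hz | hz | hz | ⟨i, hi⟩
          · obtain ⟨u, hu⟩ := hv ⟨0, hm0⟩
            rw [hz] at hu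
            exact absurd hu (by simp [allom19])
          · exact Or.inl hz
          · exact Or.inr hz
          · obtain ⟨u, hu⟩ := hv i
            rw [hi] at hu
            exact absurd hu (by simp)
        have hxvert : ∀ i, ∃ u, x i = GS.vert u := by
          intro i
          obtain ⟨u, v, hu, hv, hE⟩ := gsMul_eq_omega19 (hall i)
          exact ⟨u, hu⟩
        have hyvert : ∀ i, ∃ u, y i = GS.vert u := by
          intro i
          obtain ⟨u, v, hu, hv, hE⟩ := gsMul_eq_omega19 (hall i)
          exact ⟨v, hv⟩
        rcases hvert x hx hxvert with ⟨j, hxj⟩ | ⟨k, j, hxj⟩ <;>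
          rcases hvert y hy hyvert with ⟨j', hyj⟩ | ⟨k', j', hyj⟩
        · -- cst, cst
          have he : (j' : ℕ) = (j : ℕ) + 1 := by
            refine hstep ⟨0, hm0⟩ j j' ?_ ?_
            · rw [hxj]; rfl
            · rw [hyj]; rfl
          rw [hxj, hyj, phi19_cst hm, phi19_cst hm]
          exact (gsMul_of_E19 (show unionPathE19 m n (Sum.inl j) (Sum.inl j') from he)).symm
        · -- cst, tpt : impossible
          exfalso
          obtain ⟨i, hik⟩ := exists_ne_fin19 hm k'
          have e1 : ((j'.succ : Fin (n + 1)) : ℕ) = (j : ℕ) + 1 :=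
            hstep k' j j'.succ (by rw [hxj]; rfl) (by rw [hyj]; exact tpt19_apply_self k' j')
          have e2 : ((j'.castSucc : Fin (n + 1)) : ℕ) = (j : ℕ) + 1 :=
            hstep i j j'.castSucc (by rw [hxj]; rfl)
              (by rw [hyj]; exact tpt19_apply_ne hik j')
          simp only [Fin.val_succ, Fin.coe_castSucc] at e1 e2
          omega
        · -- tpt, cst : impossible
          exfalso
          obtain ⟨i, hik⟩ := exists_ne_fin19 hm k
          have e1 : (j' : ℕ) = ((j.succ : Fin (n + 1)) : ℕ) + 1 :=
            hstep k j.succ j' (by rw [hxj]; exact tpt19_apply_self k j) (by rw [hyj]; rfl)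
          have e2 : (j' : ℕ) = ((j.castSucc : Fin (n + 1)) : ℕ) + 1 :=
            hstep i j.castSucc j' (by rw [hxj]; exact tpt19_apply_ne hik j)
              (by rw [hyj]; rfl)
          simp only [Fin.val_succ, Fin.coe_castSucc] at e1 e2
          omega
        · -- tpt, tpt
          by_cases hkk : k = k'
          · subst hkk
            obtain ⟨i, hik⟩ := exists_ne_fin19 hm k
            have e2 : ((j'.castSucc : Fin (n + 1)) : ℕ) = ((j.castSucc : Fin (n + 1)) : ℕ) + 1 :=
              hstep i j.castSucc j'.castSucc (by rw [hxj]; exact tpt19_apply_ne hik j)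
                (by rw [hyj]; exact tpt19_apply_ne hik j')
            simp only [Fin.coe_castSucc] at e2
            rw [hxj, hyj, phi19_tpt hm, phi19_tpt hm]
            exact (gsMul_of_E19 (show unionPathE19 m n (Sum.inr (k, j)) (Sum.inr (k, j'))
              from ⟨rfl, e2⟩)).symm
          · exfalso
            have e1 : ((j'.castSucc : Fin (n + 1)) : ℕ) = ((j.succ : Fin (n + 1)) : ℕ) + 1 :=
              hstep k j.succ j'.castSucc (by rw [hxj]; exact tpt19_apply_self k j)
                (by rw [hyj]; exact tpt19_apply_ne hkk j')
            have e2 : ((j'.succ : Fin (n + 1)) : ℕ) = ((j.castSucc : Fin (n + 1)) : ℕ) + 1 :=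
              hstep k' j.castSucc j'.succ
                (by rw [hxj]; exact tpt19_apply_ne (Ne.symm hkk) j)
                (by rw [hyj]; exact tpt19_apply_self k' j')
            simp only [Fin.val_succ, Fin.coe_castSucc] at e1 e2
            omega
      · push_neg at hall
        obtain ⟨i, hi⟩ := hall
        have hz := (gsMul_cases19 _ _ _).resolve_right hi
        rw [phi19_zero_entry (i := i) hz]
        rcases gsMul_cases19 (unionPathE19 m n) (phi19 m n x) (phi19 m n y) with h0 | h0
        · exact h0.symm
        · exfalso
          obtain ⟨u, v, hu, hv, hE⟩ := gsMul_eq_omega19 h0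
          match u, v with
          | Sum.inl j, Sum.inl j' =>
            have hxj := phi19_eq_inl hu
            have hyj := phi19_eq_inl hv
            have he : pathE (n + 1) j j' := hE
            apply hi
            rw [hxj, hyj]
            exact gsMul_of_E19 he
          | Sum.inl j, Sum.inr p => exact hE
          | Sum.inr p, Sum.inl j => exact hE
          | Sum.inr p, Sum.inr p' =>
            obtain ⟨k, j⟩ := p
            obtain ⟨k', j'⟩ := p'
            have hxj := phi19_eq_inr hu
            have hyj := phi19_eq_inr hv
            obtain ⟨hk, hjj⟩ := (hE : k = k' ∧ (j' : ℕ) = (j : ℕ) + 1)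
            subst hk
            have hjj2 : (j' : ℕ) = (j : ℕ) + 1 := hjj
            clear hjj
            apply hi
            rw [hxj, hyj]
            by_cases hik : i = k
            · subst hik
              rw [tpt19_apply_self, tpt19_apply_self]
              exact gsMul_of_E19 (show pathE (n + 1) j.succ j'.succ by
                simp [pathE, Fin.val_succ]; omega)
            · rw [tpt19_apply_ne hik, tpt19_apply_ne hik]
              exact gsMul_of_E19 (show pathE (n + 1) j.castSucc j'.castSucc by
                simp [pathE, Fin.coe_castSucc]; omega)
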